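/- For every n ≥ 1, if β = γ_n is the unique real number greater than 1 with β^{g_n+1} = β + 1 (g_n = ⌊2^{n+1}/3⌋), then P_{φ^{n-1}(21)}(β) = P_{φ^{n-1}(2)}(β), where φ is the morphism φ(1)=2, φ(2)=211 and P_w(X) = (-X)^k + Σ_{i=1}^k a_i(-X)^{k-i} for w = a_1⋯a_k over {1,2}. -/

import Mathlib

/-- The morphism φ on the alphabet {1,2}: φ(1) = 2, φ(2) = 211. -/
def phi : ℕ → List ℕ
  | 1 => [2]
  | 2 => [2, 1, 1]
  | _ => []

/-- Extension of φ to words by concatenation. -/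
def phiW (w : List ℕ) : List ℕ := w.flatMap phi

/-- The polynomial P_{a₁⋯a_k}(X) = (-X)^k + Σ_{i=1}^k a_i (-X)^{k-i}, evaluated at x. -/
def P (w : List ℕ) (x : ℝ) : ℝ :=
  (-x) ^ w.length + ∑ i ∈ Finset.range w.length, (w.getD i 0 : ℝ) * (-x) ^ (w.length - 1 - i)

/-- g_n = ⌊2^(n+1)/3⌋. -/
def g (n : ℕ) : ℕ := 2 ^ (n + 1) / 3

/-! ### Auxiliary development -/

/-- B n = φⁿ(1). -/
def B (n : ℕ) : List ℕ := phiW^[n] [1]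

/-- ℓ n = |φⁿ(1)|. -/
def l (n : ℕ) : ℕ := (B n).length

/-- Parity indicator: 1 if n even, 0 if n odd. -/
def e (n : ℕ) : ℕ := if Even n then 1 else 0

/-- The product ∏_{m<n} (x^{ℓ m} - 1). -/
noncomputable def Pp (n : ℕ) (x : ℝ) : ℝ := ∏ m ∈ Finset.range n, (x ^ l m - 1)

lemma Pp_succ (n : ℕ) (x : ℝ) : Pp (n + 1) x = Pp n x * (x ^ l n - 1) :=
  Finset.prod_range_succ _ _

lemma phiW_append (u v : List ℕ) : phiW (u ++ v) = phiW u ++ phiW v :=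
  List.flatMap_append (f := phi) (xs := u) (ys := v)

lemma iter_append (n : ℕ) (u v : List ℕ) :
    phiW^[n] (u ++ v) = phiW^[n] u ++ phiW^[n] v := by
  induction n generalizing u v with
  | zero => rfl
  | succ k ih =>
    rw [Function.iterate_succ_apply, Function.iterate_succ_apply,
      Function.iterate_succ_apply, phiW_append, ih]

lemma B_two : phiW^[n] [2] = B (n + 1) := by
  rw [show ([2] : List ℕ) = phiW [1] from rfl, ← Function.iterate_succ_apply, B]

lemma B_rec (n : ℕ) : B (n + 2) = B (n + 1) ++ B n ++ B n := by
  have h : B (n + 2) = phiW^[n] [2, 1, 1] := by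
    rw [B, show n + 2 = n + 1 + 1 from rfl, Function.iterate_succ_apply,
      Function.iterate_succ_apply]
    rfl
  rw [h, show ([2, 1, 1] : List ℕ) = [2] ++ [1] ++ [1] from rfl,
    iter_append, iter_append, B_two]
  rfl

lemma l_rec (n : ℕ) : l (n + 2) = l (n + 1) + 2 * l n := by
  rw [l, B_rec, List.length_append, List.length_append]
  simp [l]; omega

lemma l_zero : l 0 = 1 := rfl
lemma l_one : l 1 = 1 := rfl

lemma e_two (n : ℕ) : e (n + 2) = e n := by
  simp [e, Nat.even_add_one, not_not]

lemma e_sum (n : ℕ) : e n + e (n + 1) = 1 := by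
  rcases Nat.even_or_odd n with h | h <;>
    simp [e, h, Nat.even_add_one, Nat.not_even_iff_odd, Nat.not_even_iff_odd] at * <;>
    omega

lemma key (n : ℕ) : e n + l (n + 1) = 2 * l n + e (n + 1) := by
  induction n with
  | zero => simp [e, l_zero, l_one]
  | succ k ih =>
    have h1 : l (k + 1 + 1) = l (k + 1) + 2 * l k := l_rec k
    have h2 : e (k + 1 + 1) = e k := e_two k
    omega

lemma three_l (n : ℕ) : 3 * l n + e (n + 1) = 2 ^ (n + 1) + e n := by
  induction n with
  | zero => simp [e, l_zero, l_one]
  | succ k ih =>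
    have h1 := key k
    have h2 : e (k + 1 + 1) = e k := e_two k
    have h3 : (2 : ℕ) ^ (k + 1 + 1) = 2 * 2 ^ (k + 1) := by ring
    omega

lemma l_odd (n : ℕ) : Odd (l n) := by
  have h1 := three_l n
  have h2 := e_sum n
  have h3 : (2 : ℕ) ^ (n + 1) = 2 * 2 ^ n := by ring
  rw [Nat.odd_iff]
  omega

lemma g_bridge (n : ℕ) : e (n + 1) + 2 * l n = g (n + 1) + 1 := by
  have h1 := three_l n
  have h2 := e_sum n
  have h3 : (2 : ℕ) ^ (n + 1 + 1) = 2 * 2 ^ (n + 1) := by ring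
  rw [g]
  omega

lemma P_append (u v : List ℕ) (x : ℝ) :
    P (u ++ v) x = (-x) ^ v.length * P u x + P v x - (-x) ^ v.length := by
  unfold P
  rw [List.length_append, Finset.sum_range_add]
  have h1 : ∀ i ∈ Finset.range u.length,
      (((u ++ v).getD i 0 : ℕ) : ℝ) * (-x) ^ (u.length + v.length - 1 - i)
        = (-x) ^ v.length * (((u.getD i 0 : ℕ) : ℝ) * (-x) ^ (u.length - 1 - i)) := by
    intro i hi
    rw [Finset.mem_range] at hi
    rw [List.getD_append _ _ _ _ hi,
      show u.length + v.length - 1 - i = v.length + (u.length - 1 - i) by omega, pow_add]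
    ring
  have h2 : ∀ i ∈ Finset.range v.length,
      (((u ++ v).getD (u.length + i) 0 : ℕ) : ℝ) * (-x) ^ (u.length + v.length - 1 - (u.length + i))
        = ((v.getD i 0 : ℕ) : ℝ) * (-x) ^ (v.length - 1 - i) := by
    intro i hi
    rw [List.getD_append_right _ _ _ _ (Nat.le_add_right _ _), Nat.add_sub_cancel_left,
      show u.length + v.length - 1 - (u.length + i) = v.length - 1 - i by omega]
  rw [Finset.sum_congr rfl h1, Finset.sum_congr rfl h2, ← Finset.mul_sum, pow_add]
  ring

lemma F_formula : ∀ n : ℕ, ∀ x : ℝ, P (B n) x = 1 - x ^ e n * Pp n x := by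
  have main : ∀ n : ℕ, (∀ x : ℝ, P (B n) x = 1 - x ^ e n * Pp n x) ∧
      (∀ x : ℝ, P (B (n + 1)) x = 1 - x ^ e (n + 1) * Pp (n + 1) x) := by
    intro n
    induction n with
    | zero =>
      constructor
      · intro x
        show P [1] x = _
        simp [P, Pp, e]
        ring
      · intro x
        show P [2] x = _
        simp [P, Pp, e, Finset.prod_range_one, l_zero]
        ring
    | succ k ih =>
      obtain ⟨ih0, ih1⟩ := ih
      refine ⟨ih1, fun x => ?_⟩
      have hBl : (B k).length = l k := rfl
      have hneg : (-x) ^ l k = -(x ^ l k) := Odd.neg_pow (l_odd k) x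
      have hexp : x ^ e k * x ^ l (k + 1) = x ^ l k * x ^ l k * x ^ e (k + 1) := by
        rw [← pow_add, ← pow_add, ← pow_add,
          show l k + l k + e (k + 1) = 2 * l k + e (k + 1) by ring, ← key k]
      rw [B_rec, P_append, P_append, ih0 x, ih1 x, hBl, hneg, e_two,
        Pp_succ (k + 1), Pp_succ k]
      linear_combination (Pp k x * (x ^ l k - 1)) * hexp
  exact fun n => (main n).1

theorem P_eq_at_gamma (n : ℕ) (hn : 1 ≤ n) (β : ℝ) (hβ : 1 < β)
    (hγ : β ^ (g n + 1) = β + 1) :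
    P (phiW^[n - 1] [2, 1]) β = P (phiW^[n - 1] [2]) β := by
  obtain ⟨m, rfl⟩ : ∃ m, n = m + 1 := ⟨n - 1, (Nat.succ_pred_eq_of_pos hn).symm⟩
  simp only [Nat.add_sub_cancel]
  have h21 : phiW^[m] [2, 1] = B (m + 1) ++ B m := by
    rw [show ([2, 1] : List ℕ) = [2] ++ [1] from rfl, iter_append, B_two]
    rfl
  rw [h21, B_two, P_append]
  have hBl : (B m).length = l m := rfl
  have hneg : (-β) ^ l m = -(β ^ l m) := Odd.neg_pow (l_odd m) β
  have h1 : β ^ e (m + 1) * (β ^ l m * β ^ l m) = β + 1 := by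
    rw [← pow_add, ← pow_add, show e (m + 1) + (l m + l m) = g (m + 1) + 1 by
      have := g_bridge m; omega, hγ]
  have h2 : β ^ e (m + 1) + β ^ e m = β + 1 := by
    rcases Nat.even_or_odd m with h | h <;>
      simp [e, h, Nat.even_add_one, Nat.not_even_iff_odd, Nat.not_even_iff_odd] <;> ring
  rw [F_formula (m + 1), F_formula m, hBl, hneg, Pp_succ m]
  linear_combination (Pp m β) * h1 - (Pp m β) * h2
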